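/- Let w ∈ L_n and α ∈ B_n^+. Then α ∈ F_n(w) if and only if μ ≼ α for some μ ∈ F_n^min(w); equivalently, F_n(w) = ⋃_{μ ∈ F_n^min(w)} μ·B_n^+. -/

import Mathlib

/-!
Common setup: the positive braid monoid `B_n^+` on `n` strands, presented by the
Artin generators `σ_1, …, σ_{n-1}` (1-based indexing) with the braid relations;
lex-representatives, forbidden prefixes, admissible functions, etc.
-/

namespace BraidPaper

/-- Words in the Artin generators: the free monoid on `n - 1` letters. -/
abbrev Word (n : ℕ) := FreeMonoid (Fin (n - 1))

/-- The generator `σ_i` (`1 ≤ i ≤ n - 1`, 1-based) as a one-letter word;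
the empty word for out-of-range indices. -/
def sigma (n : ℕ) (i : ℕ) : Word n :=
  if h : 1 ≤ i ∧ i ≤ n - 1 then FreeMonoid.of (⟨i - 1, by omega⟩ : Fin (n - 1)) else 1

/-- The braid relations. -/
inductive BraidRel (n : ℕ) : Word n → Word n → Prop
  | comm : ∀ i j : ℕ, 1 ≤ i → i ≤ n - 1 → 1 ≤ j → j ≤ n - 1 → (i + 2 ≤ j ∨ j + 2 ≤ i) →
      BraidRel n (sigma n i * sigma n j) (sigma n j * sigma n i)
  | braid : ∀ i : ℕ, 1 ≤ i → i + 1 ≤ n - 1 →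
      BraidRel n (sigma n i * sigma n (i + 1) * sigma n i)
        (sigma n (i + 1) * sigma n i * sigma n (i + 1))

/-- The congruence generated by the braid relations. -/
def braidCon (n : ℕ) : Con (Word n) := conGen (BraidRel n)

/-- The positive braid monoid `B_n^+`. -/
abbrev PB (n : ℕ) := (braidCon n).Quotient

/-- The canonical projection `b : A_n^* → B_n^+`. -/
def pr (n : ℕ) : Word n →* PB n := (braidCon n).mk'

/-- The length homomorphism on words (with values in `Multiplicative ℕ`). -/
def lenHom (n : ℕ) : Word n →* Multiplicative ℕ :=
  FreeMonoid.lift fun _ => Multiplicative.ofAdd 1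

lemma lenHom_sigma (n t : ℕ) (h1 : 1 ≤ t) (h2 : t ≤ n - 1) :
    lenHom n (sigma n t) = Multiplicative.ofAdd 1 := by
  rw [sigma, dif_pos ⟨h1, h2⟩]
  exact FreeMonoid.lift_eval_of _ _

lemma braidCon_le_ker (n : ℕ) : braidCon n ≤ Con.ker (lenHom n) := by
  refine Con.conGen_le.2 ?_
  intro x y h
  rw [Con.ker_rel]
  cases h with
  | comm i j hi hi' hj hj' hij =>
      rw [map_mul, map_mul, mul_comm]
  | braid i hi hi' =>
      rw [map_mul, map_mul, map_mul, map_mul,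
        lenHom_sigma n i hi (by omega), lenHom_sigma n (i + 1) (by omega) hi']

/-- The (well-defined) length of a positive braid. -/
def len (n : ℕ) (x : PB n) : ℕ :=
  Multiplicative.toAdd (Con.lift _ (lenHom n) (braidCon_le_ker n) x)

/-- The length of a word. -/
def wlen {n : ℕ} (w : Word n) : ℕ := (FreeMonoid.toList w).length

/-- Strict lexicographic order on words, induced by `σ_1 < σ_2 < ⋯ < σ_{n-1}`. -/
def lexLt {n : ℕ} (u v : Word n) : Prop :=
  List.Lex (· < ·) (FreeMonoid.toList u) (FreeMonoid.toList v)

/-- `L_n`: the set of lex-representatives, i.e. words that are `≤_lex`-minimal among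
all words representing the same element of `B_n^+` (all of which have equal length). -/
def Ln (n : ℕ) : Set (Word n) :=
  {w | ∀ v : Word n, pr n v = pr n w → ¬ lexLt v w}

open Classical in
/-- `ω(β)`: the lex-representative of a positive braid `β`. -/
noncomputable def omegaRep (n : ℕ) (β : PB n) : Word n :=
  if h : ∃ w : Word n, pr n w = β ∧ w ∈ Ln n then h.choose else 1

/-- `F_n(w)`: the set of forbidden prefixes after `w`. -/
def Fset (n : ℕ) (w : Word n) : Set (PB n) :=
  {α | w * omegaRep n α ∉ Ln n}

/-- Left-divisibility `a ≼ b` in `B_n^+`. -/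
def ldvd (n : ℕ) (a b : PB n) : Prop := ∃ c : PB n, a * c = b

/-- The set of `≼`-minimal elements of a subset of `B_n^+`. -/
def minimals (n : ℕ) (S : Set (PB n)) : Set (PB n) :=
  {a | a ∈ S ∧ ∀ b ∈ S, ldvd n b a → b = a}

/-- `F_n^min(w)`: the set of minimal forbidden prefixes after `w`. -/
def Fmin (n : ℕ) (w : Word n) : Set (PB n) := minimals n (Fset n w)

/-- `d` is a least common right-multiple of the set `S`. -/
def IsLcm (n : ℕ) (S : Set (PB n)) (d : PB n) : Prop :=
  (∀ a ∈ S, ldvd n a d) ∧ ∀ e : PB n, (∀ a ∈ S, ldvd n a e) → ldvd n d e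

/-- The descending product `σ_a σ_{a-1} ⋯ σ_b` (empty if `b > a`). -/
def prodDesc (n a b : ℕ) : Word n :=
  (((List.range' b (a + 1 - b)).reverse).map (sigma n)).prod

/-- The ascending product `σ_a σ_{a+1} ⋯ σ_b` (empty if `a > b`). -/
def prodAsc (n a b : ℕ) : Word n :=
  ((List.range' a (b + 1 - a)).map (sigma n)).prod

/-- Admissible functions `f : {1,…,n-1} → {-1,0,1,…,n-1}`. -/
def Admissible (n : ℕ) (f : ℕ → ℤ) : Prop :=
  (∀ i : ℕ, 1 ≤ i → i ≤ n - 1 → -1 ≤ f i ∧ f i ≤ (i : ℤ)) ∧ f 1 ≠ -1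

/-- The set `F_f ⊆ B_n^+` associated to an admissible function `f`: the elements
`σ_i σ_{i-1} ⋯ σ_{f(i)}` for `i` with `1 ≤ f(i) ≤ i`, together with the elements
`σ_{i-1} σ_i` for `i` with `f(i) = -1`. -/
def Ff (n : ℕ) (f : ℕ → ℤ) : Set (PB n) :=
  {x | ∃ i : ℕ, 1 ≤ i ∧ i ≤ n - 1 ∧ 1 ≤ f i ∧ f i ≤ (i : ℤ) ∧
        x = pr n (prodDesc n i (f i).toNat)} ∪
  {x | ∃ i : ℕ, 1 ≤ i ∧ i ≤ n - 1 ∧ f i = -1 ∧ x = pr n (sigma n (i - 1) * sigma n i)}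

/-- `F_n^min(w, m)`: the set of `≼`-minimal elements of `{σ_1,…,σ_m} ∪ F_n^min(w)`. -/
def FminM (n : ℕ) (w : Word n) (m : ℕ) : Set (PB n) :=
  minimals n ({x | ∃ i : ℕ, 1 ≤ i ∧ i ≤ m ∧ x = pr n (sigma n i)} ∪ Fmin n w)

/-- `x_{n,j}` (for `j : ℤ`): the number of elements of `B_n^+` of length `j`
(`0` for negative `j`). -/
noncomputable def xcount (n : ℕ) (j : ℤ) : ℕ :=
  Nat.card {x : PB n // (len n x : ℤ) = j}

/-- `x_{n,k}(w,m)`: the number of words in `L_n` of length `k` of the form `w·w'`,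
where `w'` does not begin with any of `σ_1, …, σ_m`. -/
noncomputable def xwm (n k : ℕ) (w : Word n) (m : ℕ) : ℕ :=
  Nat.card {v : Word n // wlen v = k ∧ v ∈ Ln n ∧
    ∃ w' : Word n, v = w * w' ∧
      ∀ i : ℕ, 1 ≤ i → i ≤ m → ¬ ∃ u : Word n, w' = sigma n i * u}


/-! ### Auxiliary development for Statement 19 -/

section Aux

open Relation List

variable {n : ℕ}

/-- Letter-level braid relation pairs. -/
inductive Bp (n : ℕ) : List (Fin (n-1)) → List (Fin (n-1)) → Prop
  | comm (a b : Fin (n-1)) (h : (a:ℕ) + 2 ≤ b ∨ (b:ℕ) + 2 ≤ a) : Bp n [a,b] [b,a]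
  | braid (a b : Fin (n-1)) (h : (b:ℕ) = a + 1) : Bp n [a,b,a] [b,a,b]

/-- One rewriting step. -/
def StepL (n : ℕ) (u v : List (Fin (n-1))) : Prop :=
  ∃ p s l r, (Bp n l r ∨ Bp n r l) ∧ u = p ++ l ++ s ∧ v = p ++ r ++ s

/-- Chains of rewriting steps. -/
def Rel (n : ℕ) : List (Fin (n-1)) → List (Fin (n-1)) → Prop :=
  Relation.ReflTransGen (StepL n)

lemma StepL.symm {u v : List (Fin (n-1))} (h : StepL n u v) : StepL n v u := by
  obtain ⟨p, s, l, r, hlr, hu, hv⟩ := h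
  exact ⟨p, s, r, l, hlr.symm, hv, hu⟩

lemma Rel.refl (u : List (Fin (n-1))) : Rel n u u := ReflTransGen.refl

lemma Rel.trans {u v w : List (Fin (n-1))} (h1 : Rel n u v) (h2 : Rel n v w) : Rel n u w :=
  ReflTransGen.trans h1 h2

lemma Rel.symm {u v : List (Fin (n-1))} (h : Rel n u v) : Rel n v u := by
  induction h with
  | refl => exact .refl _
  | tail _ hstep ih => exact Rel.trans (ReflTransGen.single hstep.symm) ih

lemma Rel.single {u v : List (Fin (n-1))} (h : StepL n u v) : Rel n u v :=
  ReflTransGen.single h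

lemma StepL.append_right {u v : List (Fin (n-1))} (w : List (Fin (n-1))) (h : StepL n u v) :
    StepL n (u ++ w) (v ++ w) := by
  obtain ⟨p, s, l, r, hlr, hu, hv⟩ := h
  exact ⟨p, s ++ w, l, r, hlr, by simp [hu], by simp [hv]⟩

lemma StepL.append_left {u v : List (Fin (n-1))} (w : List (Fin (n-1))) (h : StepL n u v) :
    StepL n (w ++ u) (w ++ v) := by
  obtain ⟨p, s, l, r, hlr, hu, hv⟩ := h
  exact ⟨w ++ p, s, l, r, hlr, by simp [hu], by simp [hv]⟩

lemma Rel.append_right {u v : List (Fin (n-1))} (w : List (Fin (n-1))) (h : Rel n u v) :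
    Rel n (u ++ w) (v ++ w) := by
  induction h with
  | refl => exact .refl _
  | tail _ hstep ih => exact ih.trans (Rel.single (hstep.append_right w))

lemma Rel.append_left {u v : List (Fin (n-1))} (w : List (Fin (n-1))) (h : Rel n u v) :
    Rel n (w ++ u) (w ++ v) := by
  induction h with
  | refl => exact .refl _
  | tail _ hstep ih => exact ih.trans (Rel.single (hstep.append_left w))

lemma Rel.cons {u v : List (Fin (n-1))} (a : Fin (n-1)) (h : Rel n u v) :
    Rel n (a :: u) (a :: v) := h.append_left [a]

lemma Bp.length_eq {l r : List (Fin (n-1))} (h : Bp n l r) : l.length = r.length := by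
  cases h <;> rfl

lemma StepL.length_eq {u v : List (Fin (n-1))} (h : StepL n u v) : u.length = v.length := by
  obtain ⟨p, s, l, r, hlr, hu, hv⟩ := h
  have : l.length = r.length := by rcases hlr with h | h; exacts [h.length_eq, h.length_eq.symm]
  simp [hu, hv]; omega

lemma Rel.length_eq {u v : List (Fin (n-1))} (h : Rel n u v) : u.length = v.length := by
  induction h with
  | refl => rfl
  | tail _ hstep ih => exact ih.trans hstep.length_eq

/-- commutation as a `Rel`. -/
lemma rel_comm {a b : Fin (n-1)} (h : (a:ℕ) + 2 ≤ b ∨ (b:ℕ) + 2 ≤ a)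
    (t : List (Fin (n-1))) : Rel n (a :: b :: t) (b :: a :: t) :=
  Rel.single ⟨[], t, [a,b], [b,a], Or.inl (Bp.comm a b h), rfl, rfl⟩

/-- braid move as a `Rel`, in either direction. -/
lemma rel_braid {a b : Fin (n-1)} (h : (a:ℕ) = b + 1 ∨ (b:ℕ) = a + 1)
    (t : List (Fin (n-1))) : Rel n (a :: b :: a :: t) (b :: a :: b :: t) := by
  rcases h with h | h
  · exact Rel.single ⟨[], t, [a,b,a], [b,a,b], Or.inr (Bp.braid b a h), rfl, rfl⟩
  · exact Rel.single ⟨[], t, [a,b,a], [b,a,b], Or.inl (Bp.braid a b h), rfl, rfl⟩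

lemma sigma_eq {i : ℕ} (h1 : 1 ≤ i) (h2 : i ≤ n - 1) :
    sigma n i = FreeMonoid.of (⟨i - 1, by omega⟩ : Fin (n-1)) := by
  rw [sigma, dif_pos ⟨h1, h2⟩]

lemma sigma_of (a : Fin (n-1)) : sigma n ((a : ℕ) + 1) = FreeMonoid.of a := by
  rw [sigma_eq (by omega) (by omega)]
  congr 1

/-- Bridge, easy direction: `Rel` implies the braid congruence. -/
lemma Rel.toCon {u v : List (Fin (n-1))} (h : Rel n u v) :
    braidCon n (FreeMonoid.ofList u) (FreeMonoid.ofList v) := by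
  induction h with
  | refl => exact (braidCon n).refl _
  | tail _ hstep ih =>
      refine ih.trans ?_
      obtain ⟨p, s, l, r, hlr, hu, hv⟩ := hstep
      subst hu; subst hv
      have key : ∀ l' r' : List (Fin (n-1)), Bp n l' r' →
          BraidPaper.braidCon n (FreeMonoid.ofList l') (FreeMonoid.ofList r') := by
        intro l' r' hb
        cases hb with
        | comm a b hab =>
            have ha := sigma_of (n := n) a
            have hbb := sigma_of (n := n) b
            have h2 : BraidRel n (sigma n ((a:ℕ)+1) * sigma n ((b:ℕ)+1))
                (sigma n ((b:ℕ)+1) * sigma n ((a:ℕ)+1)) :=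
              BraidRel.comm ((a:ℕ)+1) ((b:ℕ)+1) (by omega)
                (by have := a.2; omega) (by omega) (by have := b.2; omega) (by omega)
            have := ConGen.Rel.of _ _ h2
            rw [ha, hbb] at this
            exact this
        | braid a b hab =>
            have ha := sigma_of (n := n) a
            have hbb : sigma n ((a:ℕ) + 1 + 1) = FreeMonoid.of b := by
              rw [show (a:ℕ) + 1 + 1 = (b:ℕ) + 1 by omega]
              exact sigma_of b
            have h2 : BraidRel n (sigma n ((a:ℕ)+1) * sigma n ((a:ℕ)+1+1) * sigma n ((a:ℕ)+1))
                (sigma n ((a:ℕ)+1+1) * sigma n ((a:ℕ)+1) * sigma n ((a:ℕ)+1+1)) :=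
              BraidRel.braid ((a:ℕ)+1) (by omega) (by have := b.2; omega)
            have := ConGen.Rel.of _ _ h2
            rw [ha, hbb] at this
            exact this
      have base : BraidPaper.braidCon n (FreeMonoid.ofList l) (FreeMonoid.ofList r) := by
        rcases hlr with hb | hb
        · exact key _ _ hb
        · exact ((BraidPaper.braidCon n).symm (key _ _ hb))
      have : BraidPaper.braidCon n
          (FreeMonoid.ofList p * FreeMonoid.ofList l * FreeMonoid.ofList s)
          (FreeMonoid.ofList p * FreeMonoid.ofList r * FreeMonoid.ofList s) :=
        (BraidPaper.braidCon n).mul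
          ((BraidPaper.braidCon n).mul ((BraidPaper.braidCon n).refl _) base)
          ((BraidPaper.braidCon n).refl _)
      exact this

/-- The congruence built from `Rel`. -/
def relCon (n : ℕ) : Con (Word n) where
  r x y := Rel n (FreeMonoid.toList x) (FreeMonoid.toList y)
  iseqv := ⟨fun x => Rel.refl _, Rel.symm, Rel.trans⟩
  mul' := by
    intro a b c d h1 h2
    show Rel n (FreeMonoid.toList (a * c)) (FreeMonoid.toList (b * d))
    rw [FreeMonoid.toList_mul, FreeMonoid.toList_mul]
    exact (h1.append_right _).trans (h2.append_left _)

/-- Bridge, hard direction. -/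
lemma braidCon_rel {u v : Word n} (h : braidCon n u v) :
    Rel n (FreeMonoid.toList u) (FreeMonoid.toList v) := by
  have hle : braidCon n ≤ relCon n := by
    refine Con.conGen_le.2 (fun x y hxy => ?_)
    show relCon n x y
    cases hxy with
    | comm i j hi hi' hj hj' hij =>
        show Rel n _ _
        rw [FreeMonoid.toList_mul, FreeMonoid.toList_mul,
          sigma_eq (i := i) hi hi', sigma_eq (i := j) hj hj', FreeMonoid.toList_of, FreeMonoid.toList_of]
        exact rel_comm (by simp only [Fin.val_mk]; omega) []
    | braid i hi hi' =>
        show Rel n _ _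
        simp only [FreeMonoid.toList_mul, sigma_eq (n := n) (i := i) hi (by omega),
          sigma_eq (n := n) (i := i+1) (by omega : 1 ≤ i+1) hi', FreeMonoid.toList_of]
        exact rel_braid (Or.inr (by simp only [Fin.val_mk]; omega)) []
  exact hle h

lemma pr_eq_iff {u v : Word n} :
    pr n u = pr n v ↔ Rel n (FreeMonoid.toList u) (FreeMonoid.toList v) := by
  have : pr n u = pr n v ↔ braidCon n u v := by
    exact Con.eq _
  rw [this]
  refine ⟨braidCon_rel, fun h => ?_⟩
  have := h.toCon
  simpa using this

end Aux

section Key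

open Relation List

variable {n : ℕ}

/-- Complement words for the left-lcm of two generators. -/
def comp (a b : Fin (n-1)) : List (Fin (n-1)) :=
  if a = b then [] else if (a:ℕ)+2 ≤ b ∨ (b:ℕ)+2 ≤ a then [b] else [b,a]

lemma comp_self (a : Fin (n-1)) : comp a a = [] := by simp [comp]

lemma comp_far {a b : Fin (n-1)} (h : (a:ℕ)+2 ≤ b ∨ (b:ℕ)+2 ≤ a) : comp a b = [b] := by
  have : a ≠ b := by intro e; subst e; omega
  rw [comp, if_neg this, if_pos h]

lemma comp_adj {a b : Fin (n-1)} (h : (a:ℕ) = b+1 ∨ (b:ℕ) = a+1) : comp a b = [b,a] := by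
  have h1 : a ≠ b := by
    intro e; subst e; omega
  have h2 : ¬ ((a:ℕ)+2 ≤ b ∨ (b:ℕ)+2 ≤ a) := by omega
  rw [comp, if_neg h1, if_neg h2]

lemma fin_cases3 (a b : Fin (n-1)) :
    a = b ∨ ((a:ℕ)+2 ≤ b ∨ (b:ℕ)+2 ≤ a) ∨ ((a:ℕ) = b+1 ∨ (b:ℕ) = a+1) := by
  by_cases h : a = b
  · exact Or.inl h
  · have : (a:ℕ) ≠ (b:ℕ) := fun e => h (Fin.ext e)
    right; omega

/-- The induction hypothesis package for the key lemma. -/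
def KeyIH (n L : ℕ) : Prop :=
  ∀ L' : ℕ, L' < L → ∀ (u v : List (Fin (n-1))) (a b : Fin (n-1)),
    u.length ≤ L' → Rel n (a :: u) (b :: v) →
    ∃ z, Rel n u (comp a b ++ z) ∧ Rel n v (comp b a ++ z)

lemma combine_i {L : ℕ} (IH : KeyIH n L) {a b x : Fin (n-1)} {s z1 v : List (Fin (n-1))}
    (hax : (a:ℕ)+2 ≤ x ∨ (x:ℕ)+2 ≤ a) (hL : s.length + 1 ≤ L)
    (h1 : Rel n (a :: s) (comp x b ++ z1)) (h2 : Rel n v (comp b x ++ z1)) :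
    ∃ z, Rel n (x :: s) (comp a b ++ z) ∧ Rel n v (comp b a ++ z) := by
  by_cases hxb : x = b
  · subst hxb
    rw [comp_self] at h1 h2
    simp only [List.nil_append] at h1 h2
    refine ⟨s, ?_, ?_⟩
    · rw [comp_far hax]; exact Rel.refl _
    · rw [comp_far (Or.symm hax)]
      exact h2.trans h1.symm
  · have hxbv : (x:ℕ) ≠ (b:ℕ) := fun e => hxb (Fin.ext e)
    by_cases hxbf : (x:ℕ)+2 ≤ b ∨ (b:ℕ)+2 ≤ x
    · -- x and b commute
      rw [comp_far hxbf] at h1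
      rw [comp_far (Or.symm hxbf)] at h2
      simp only [List.cons_append, List.nil_append] at h1 h2
      obtain ⟨z2, hs2, hz12⟩ := IH (L-1) (by omega) s z1 a b (by omega) h1
      rcases fin_cases3 a b with hab | habf | habj
      · subst hab
        rw [comp_self] at hs2 hz12 ⊢
        simp only [List.nil_append] at hs2 hz12 ⊢
        exact ⟨x :: z2, hs2.cons x, h2.trans (hz12.cons x)⟩
      · rw [comp_far habf] at hs2 ⊢
        rw [comp_far (Or.symm habf)] at hz12 ⊢
        simp only [List.cons_append, List.nil_append] at hs2 hz12 ⊢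
        refine ⟨x :: z2, ?_, ?_⟩
        · exact (hs2.cons x).trans (rel_comm hxbf z2)
        · exact (h2.trans (hz12.cons x)).trans (rel_comm (Or.symm hax) z2)
      · rw [comp_adj habj] at hs2 ⊢
        rw [comp_adj (Or.symm habj)] at hz12 ⊢
        simp only [List.cons_append, List.nil_append] at hs2 hz12 ⊢
        refine ⟨x :: z2, ?_, ?_⟩
        · exact ((hs2.cons x).trans (rel_comm hxbf (a :: z2))).trans
            ((rel_comm (Or.symm hax) z2).cons b)
        · exact ((h2.trans (hz12.cons x)).trans (rel_comm (Or.symm hax) (b :: z2))).trans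
            ((rel_comm hxbf z2).cons a)
    · -- x and b adjacent
      have hxbj : (x:ℕ) = b+1 ∨ (b:ℕ) = x+1 := by omega
      rw [comp_adj hxbj] at h1
      rw [comp_adj (Or.symm hxbj)] at h2
      simp only [List.cons_append, List.nil_append] at h1 h2
      have hlen1 := h1.length_eq
      simp only [List.length_cons] at hlen1
      obtain ⟨z2, hs2, hq2⟩ := IH (L-1) (by omega) s (x :: z1) a b (by omega) h1
      rcases fin_cases3 a b with hab | habf | habj
      · exfalso; subst hab; omega
      · -- a, b far apart; x adjacent to b, far from a
        rw [comp_far habf] at hs2 ⊢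
        rw [comp_far (Or.symm habf)] at hq2 ⊢
        simp only [List.cons_append, List.nil_append] at hs2 hq2 ⊢
        have hlen2 := hq2.length_eq
        simp only [List.length_cons] at hlen2
        obtain ⟨z3, hz13, hz23⟩ := IH (L-1) (by omega) z1 z2 x a (by omega) hq2
        rw [comp_far (Or.symm hax)] at hz13
        rw [comp_far hax] at hz23
        simp only [List.cons_append, List.nil_append] at hz13 hz23
        refine ⟨x :: b :: z3, ?_, ?_⟩
        · exact ((hs2.cons x).trans ((hz23.cons b).cons x)).trans (rel_braid hxbj z3)
        · exact (((h2.trans ((hz13.cons b).cons x)).trans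
            ((rel_comm (Or.symm habf) z3).cons x)).trans (rel_comm (Or.symm hax) (b :: z3)))
      · -- a, b adjacent; x adjacent to b, far from a
        rw [comp_adj habj] at hs2 ⊢
        rw [comp_adj (Or.symm habj)] at hq2 ⊢
        simp only [List.cons_append, List.nil_append] at hs2 hq2 ⊢
        have hlen2 := hq2.length_eq
        simp only [List.length_cons] at hlen2
        obtain ⟨z3, hz13, hbz⟩ := IH (L-1) (by omega) z1 (b :: z2) x a (by omega) hq2
        rw [comp_far (Or.symm hax)] at hz13
        rw [comp_far hax] at hbz
        simp only [List.cons_append, List.nil_append] at hz13 hbz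
        have hlen3 := hbz.length_eq
        simp only [List.length_cons] at hlen3
        obtain ⟨z4, hz24, hz34⟩ := IH (L-1) (by omega) z2 z3 b x (by omega) hbz
        rw [comp_adj (Or.symm hxbj)] at hz24
        rw [comp_adj hxbj] at hz34
        simp only [List.cons_append, List.nil_append] at hz24 hz34
        refine ⟨x :: b :: a :: z4, ?_, ?_⟩
        · -- x::s ≡ b::a::(x::b::a::z4)
          have c1 : Rel n (x :: s) (x :: b :: a :: x :: b :: z4) :=
            (hs2.cons x).trans (((hz24.cons a).cons b).cons x)
          have c2 : Rel n (x :: b :: a :: x :: b :: z4) (x :: b :: x :: a :: b :: z4) :=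
            ((rel_comm hax (b :: z4)).cons b).cons x
          have c3 : Rel n (x :: b :: x :: a :: b :: z4) (b :: x :: b :: a :: b :: z4) :=
            rel_braid hxbj (a :: b :: z4)
          have c4 : Rel n (b :: x :: b :: a :: b :: z4) (b :: x :: a :: b :: a :: z4) :=
            ((rel_braid (Or.symm habj) z4).cons x).cons b
          have c5 : Rel n (b :: x :: a :: b :: a :: z4) (b :: a :: x :: b :: a :: z4) :=
            (rel_comm (Or.symm hax) (b :: a :: z4)).cons b
          exact (((c1.trans c2).trans c3).trans c4).trans c5
        · -- v ≡ a::b::(x::b::a::z4)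
          have c1 : Rel n v (x :: b :: a :: b :: x :: z4) :=
            (h2.trans ((hz13.cons b).cons x)).trans (((hz34.cons a).cons b).cons x)
          have c2 : Rel n (x :: b :: a :: b :: x :: z4) (x :: a :: b :: a :: x :: z4) :=
            (rel_braid (Or.symm habj) (x :: z4)).cons x
          have c3 : Rel n (x :: a :: b :: a :: x :: z4) (a :: x :: b :: a :: x :: z4) :=
            rel_comm (Or.symm hax) (b :: a :: x :: z4)
          have c4 : Rel n (a :: x :: b :: a :: x :: z4) (a :: x :: b :: x :: a :: z4) :=
            (((rel_comm hax z4).cons b).cons x).cons a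
          have c5 : Rel n (a :: x :: b :: x :: a :: z4) (a :: b :: x :: b :: a :: z4) :=
            (rel_braid hxbj (a :: z4)).cons a
          exact (((c1.trans c2).trans c3).trans c4).trans c5

end Key

section Key2

open Relation List

variable {n : ℕ}

lemma combine_ii {L : ℕ} (IH : KeyIH n L) {a b x : Fin (n-1)} {s z1 v : List (Fin (n-1))}
    (hax : (a:ℕ) = x+1 ∨ (x:ℕ) = a+1) (hL : s.length + 2 ≤ L)
    (h1 : Rel n (a :: x :: s) (comp x b ++ z1)) (h2 : Rel n v (comp b x ++ z1)) :
    ∃ z, Rel n (x :: a :: s) (comp a b ++ z) ∧ Rel n v (comp b a ++ z) := by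
  by_cases hxb : x = b
  · subst hxb
    rw [comp_self] at h1 h2
    simp only [List.nil_append] at h1 h2
    refine ⟨s, ?_, ?_⟩
    · rw [comp_adj hax]; exact Rel.refl _
    · rw [comp_adj (Or.symm hax)]
      exact h2.trans h1.symm
  · have hxbv : (x:ℕ) ≠ (b:ℕ) := fun e => hxb (Fin.ext e)
    by_cases hxbf : (x:ℕ)+2 ≤ b ∨ (b:ℕ)+2 ≤ x
    · -- x and b far apart
      rw [comp_far hxbf] at h1
      rw [comp_far (Or.symm hxbf)] at h2
      simp only [List.cons_append, List.nil_append] at h1 h2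
      obtain ⟨z2, hxs, hz12⟩ := IH (L-1) (by omega) (x :: s) z1 a b (by simp; omega) h1
      rcases fin_cases3 a b with hab | habf | habj
      · exfalso; subst hab; omega
      · -- a, b far; x, b far; a, x adjacent
        rw [comp_far habf] at hxs ⊢
        rw [comp_far (Or.symm habf)] at hz12 ⊢
        simp only [List.cons_append, List.nil_append] at hxs hz12 ⊢
        obtain ⟨z3, hs3, hz23⟩ := IH (L-1) (by omega) s z2 x b (by omega) hxs
        rw [comp_far hxbf] at hs3
        rw [comp_far (Or.symm hxbf)] at hz23
        simp only [List.cons_append, List.nil_append] at hs3 hz23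
        refine ⟨x :: a :: z3, ?_, ?_⟩
        · exact ((((hs3.cons a).cons x).trans ((rel_comm habf z3).cons x)).trans
            (rel_comm hxbf (a :: z3)))
        · exact ((h2.trans ((hz12.cons x).trans ((hz23.cons a).cons x)))).trans
            (rel_braid (Or.symm hax) z3)
      · -- a, b adjacent; x, b far; a, x adjacent
        rw [comp_adj habj] at hxs ⊢
        rw [comp_adj (Or.symm habj)] at hz12 ⊢
        simp only [List.cons_append, List.nil_append] at hxs hz12 ⊢
        obtain ⟨z3, hs3, haz⟩ := IH (L-1) (by omega) s (a :: z2) x b (by omega) hxs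
        rw [comp_far hxbf] at hs3
        rw [comp_far (Or.symm hxbf)] at haz
        simp only [List.cons_append, List.nil_append] at hs3 haz
        have hlen1 := haz.length_eq
        simp only [List.length_cons] at hlen1
        have hlen0 := hxs.length_eq
        simp only [List.length_cons] at hlen0
        obtain ⟨z4, hz24, hz34⟩ := IH (L-1) (by omega) z2 z3 a x (by omega) haz
        rw [comp_adj hax] at hz24
        rw [comp_adj (Or.symm hax)] at hz34
        simp only [List.cons_append, List.nil_append] at hz24 hz34
        refine ⟨x :: a :: b :: z4, ?_, ?_⟩
        · have c1 : Rel n (x :: a :: s) (x :: a :: b :: a :: x :: z4) :=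
            (((hs3.trans (hz34.cons b)).cons a).cons x)
          have c2 : Rel n (x :: a :: b :: a :: x :: z4) (x :: b :: a :: b :: x :: z4) :=
            (rel_braid habj (x :: z4)).cons x
          have c3 : Rel n (x :: b :: a :: b :: x :: z4) (b :: x :: a :: b :: x :: z4) :=
            rel_comm hxbf (a :: b :: x :: z4)
          have c4 : Rel n (b :: x :: a :: b :: x :: z4) (b :: x :: a :: x :: b :: z4) :=
            (((rel_comm (Or.symm hxbf) z4).cons a).cons x).cons b
          have c5 : Rel n (b :: x :: a :: x :: b :: z4) (b :: a :: x :: a :: b :: z4) :=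
            (rel_braid (Or.symm hax) (b :: z4)).cons b
          exact (((c1.trans c2).trans c3).trans c4).trans c5
        · have c1 : Rel n v (x :: a :: b :: x :: a :: z4) :=
            h2.trans ((hz12.trans ((hz24.cons b).cons a)).cons x)
          have c2 : Rel n (x :: a :: b :: x :: a :: z4) (x :: a :: x :: b :: a :: z4) :=
            ((rel_comm (Or.symm hxbf) (a :: z4)).cons a).cons x
          have c3 : Rel n (x :: a :: x :: b :: a :: z4) (a :: x :: a :: b :: a :: z4) :=
            rel_braid (Or.symm hax) (b :: a :: z4)
          have c4 : Rel n (a :: x :: a :: b :: a :: z4) (a :: x :: b :: a :: b :: z4) :=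
            ((rel_braid habj z4).cons x).cons a
          have c5 : Rel n (a :: x :: b :: a :: b :: z4) (a :: b :: x :: a :: b :: z4) :=
            (rel_comm hxbf (a :: b :: z4)).cons a
          exact (((c1.trans c2).trans c3).trans c4).trans c5
    · -- x and b adjacent
      have hxbj : (x:ℕ) = b+1 ∨ (b:ℕ) = x+1 := by omega
      rw [comp_adj hxbj] at h1
      rw [comp_adj (Or.symm hxbj)] at h2
      simp only [List.cons_append, List.nil_append] at h1 h2
      have hlen1 := h1.length_eq
      simp only [List.length_cons] at hlen1
      obtain ⟨z2, hxs, hq2⟩ := IH (L-1) (by omega) (x :: s) (x :: z1) a b (by simp; omega) h1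
      rcases fin_cases3 a b with hab | habf | habj
      · -- a = b
        subst hab
        rw [comp_self] at hxs hq2 ⊢
        simp only [List.nil_append] at hxs hq2 ⊢
        obtain ⟨z3, hs3, hz13⟩ := IH (L-1) (by omega) s z1 x x (by omega)
          (hxs.trans hq2.symm)
        rw [comp_self] at hs3 hz13
        simp only [List.nil_append] at hs3 hz13
        refine ⟨x :: a :: z3, ?_, ?_⟩
        · exact (hs3.cons a).cons x
        · exact h2.trans ((hz13.cons a).cons x)
      · -- a, b far; x adjacent to both a and b
        rw [comp_far habf] at hxs ⊢
        rw [comp_far (Or.symm habf)] at hq2 ⊢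
        simp only [List.cons_append, List.nil_append] at hxs hq2 ⊢
        have hlen2 := hq2.length_eq
        simp only [List.length_cons] at hlen2
        obtain ⟨z4, hs4, hz24⟩ := IH (L-1) (by omega) s z2 x b (by omega) hxs
        rw [comp_adj hxbj] at hs4
        rw [comp_adj (Or.symm hxbj)] at hz24
        simp only [List.cons_append, List.nil_append] at hs4 hz24
        obtain ⟨z3, hz13, hz23⟩ := IH (L-1) (by omega) z1 z2 x a (by omega) hq2
        rw [comp_adj (Or.symm hax)] at hz13
        rw [comp_adj hax] at hz23
        simp only [List.cons_append, List.nil_append] at hz13 hz23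
        have haz3 : Rel n (x :: a :: z3) (x :: b :: z4) := hz23.symm.trans hz24
        have hlen3 := hz23.length_eq
        simp only [List.length_cons] at hlen3
        obtain ⟨z5, hp5, hq5⟩ := IH (L-1) (by omega) (a :: z3) (b :: z4) x x
          (by simp; omega) haz3
        rw [comp_self] at hp5 hq5
        simp only [List.nil_append] at hp5 hq5
        have hab34 : Rel n (a :: z3) (b :: z4) := hp5.trans hq5.symm
        obtain ⟨z6, hz36, hz46⟩ := IH (L-1) (by omega) z3 z4 a b (by omega) hab34
        rw [comp_far habf] at hz36
        rw [comp_far (Or.symm habf)] at hz46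
        simp only [List.cons_append, List.nil_append] at hz36 hz46
        refine ⟨x :: b :: a :: x :: z6, ?_, ?_⟩
        · have c1 : Rel n (x :: a :: s) (x :: a :: b :: x :: a :: z6) :=
            ((hs4.trans (((hz46.cons x).cons b)))).cons a |>.cons x
          have c2 : Rel n (x :: a :: b :: x :: a :: z6) (x :: b :: a :: x :: a :: z6) :=
            (rel_comm habf (x :: a :: z6)).cons x
          have c3 : Rel n (x :: b :: a :: x :: a :: z6) (x :: b :: x :: a :: x :: z6) :=
            ((rel_braid hax (z6)).cons b).cons x
          have c4 : Rel n (x :: b :: x :: a :: x :: z6) (b :: x :: b :: a :: x :: z6) :=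
            rel_braid hxbj (a :: x :: z6)
          exact ((c1.trans c2).trans c3).trans c4
        · have c1 : Rel n v (x :: b :: a :: x :: b :: z6) :=
            h2.trans (((hz13.trans (((hz36.cons x).cons a)))).cons b |>.cons x)
          have c2 : Rel n (x :: b :: a :: x :: b :: z6) (x :: a :: b :: x :: b :: z6) :=
            (rel_comm (Or.symm habf) (x :: b :: z6)).cons x
          have c3 : Rel n (x :: a :: b :: x :: b :: z6) (x :: a :: x :: b :: x :: z6) :=
            ((rel_braid (Or.symm hxbj) z6).cons a).cons x
          have c4 : Rel n (x :: a :: x :: b :: x :: z6) (a :: x :: a :: b :: x :: z6) :=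
            rel_braid (Or.symm hax) (b :: x :: z6)
          have c5 : Rel n (a :: x :: a :: b :: x :: z6) (a :: x :: b :: a :: x :: z6) :=
            ((rel_comm habf (x :: z6)).cons x).cons a
          exact (((c1.trans c2).trans c3).trans c4).trans c5
      · -- a, b adjacent and both adjacent to x: impossible
        exact absurd habj (by omega)

end Key2

section KeyMain

open Relation List

variable {n : ℕ}

lemma key_all : ∀ (L : ℕ) (u v : List (Fin (n-1))) (a b : Fin (n-1)),
    u.length ≤ L → Rel n (a :: u) (b :: v) →
    ∃ z, Rel n u (comp a b ++ z) ∧ Rel n v (comp b a ++ z) := by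
  intro L
  induction L using Nat.strong_induction_on with
  | _ L IH =>
  have IH' : KeyIH n L := fun L' hL' u v a b h1 h2 => IH L' hL' u v a b h1 h2
  intro u v a b hlen hrel
  suffices H : ∀ w, Rel n w (b :: v) → ∀ (a' : Fin (n-1)) (u' : List (Fin (n-1))),
      w = a' :: u' → u'.length ≤ L →
      ∃ z, Rel n u' (comp a' b ++ z) ∧ Rel n v (comp b a' ++ z) from H _ hrel a u rfl hlen
  intro w hw
  induction hw using Relation.ReflTransGen.head_induction_on with
  | refl =>
      intro a' u' he hlen'
      obtain ⟨rfl, rfl⟩ : b = a' ∧ v = u' := by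
        constructor <;> [exact (List.cons.injEq _ _ _ _ ▸ he).1 ;
          exact (List.cons.injEq _ _ _ _ ▸ he).2]
      rw [comp_self]
      exact ⟨v, Rel.refl _, Rel.refl _⟩
  | head hstep hrest ih =>
      intro a' u' he hlen'
      subst he
      obtain ⟨p, s, l, r0, hlr, he1, he2⟩ := hstep
      match p, he1 with
      | p0 :: p', he1 =>
        have hap : a' = p0 ∧ u' = p' ++ l ++ s := by
          constructor <;> [exact (List.cons.injEq _ _ _ _ ▸ he1).1;
            exact (List.cons.injEq _ _ _ _ ▸ he1).2]
        obtain ⟨rfl, rfl⟩ := hap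
        have hstep' : StepL n (p' ++ l ++ s) (p' ++ r0 ++ s) := ⟨p', s, l, r0, hlr, rfl, rfl⟩
        have hlen'' : (p' ++ r0 ++ s).length ≤ L := by
          rw [← hstep'.length_eq]; exact hlen'
        obtain ⟨z, hz1, hz2⟩ := ih a' (p' ++ r0 ++ s) (by rw [he2]; rfl) hlen''
        exact ⟨z, (Rel.single hstep').trans hz1, hz2⟩
      | [], he1 =>
        simp only [List.nil_append] at he1 he2
        subst he2
        rcases hlr with hB | hB
        · cases hB with
          | comm a1 b1 h =>
              obtain ⟨rfl, rfl⟩ : a' = a1 ∧ u' = b1 :: s := by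
                simp only [List.cons_append, List.nil_append] at he1
                constructor <;> [exact (List.cons.injEq _ _ _ _ ▸ he1).1;
                  exact (List.cons.injEq _ _ _ _ ▸ he1).2]
              obtain ⟨z1, hz1, hz2⟩ := ih b1 (a' :: s) rfl (by simpa using hlen')
              exact combine_i IH' h (by simpa using hlen') hz1 hz2
          | braid a1 b1 h =>
              obtain ⟨rfl, rfl⟩ : a' = a1 ∧ u' = b1 :: a1 :: s := by
                simp only [List.cons_append, List.nil_append] at he1
                constructor <;> [exact (List.cons.injEq _ _ _ _ ▸ he1).1;
                  exact (List.cons.injEq _ _ _ _ ▸ he1).2]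
              obtain ⟨z1, hz1, hz2⟩ := ih b1 (a' :: b1 :: s) rfl (by simpa using hlen')
              exact combine_ii IH' (Or.inr h) (by simp at hlen' ⊢; omega) hz1 hz2
        · cases hB with
          | comm a1 b1 h =>
              obtain ⟨rfl, rfl⟩ : a' = b1 ∧ u' = a1 :: s := by
                simp only [List.cons_append, List.nil_append] at he1
                constructor <;> [exact (List.cons.injEq _ _ _ _ ▸ he1).1;
                  exact (List.cons.injEq _ _ _ _ ▸ he1).2]
              obtain ⟨z1, hz1, hz2⟩ := ih a1 (a' :: s) rfl (by simpa using hlen')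
              exact combine_i IH' (Or.symm h) (by simpa using hlen') hz1 hz2
          | braid a1 b1 h =>
              obtain ⟨rfl, rfl⟩ : a' = b1 ∧ u' = a1 :: b1 :: s := by
                simp only [List.cons_append, List.nil_append] at he1
                constructor <;> [exact (List.cons.injEq _ _ _ _ ▸ he1).1;
                  exact (List.cons.injEq _ _ _ _ ▸ he1).2]
              obtain ⟨z1, hz1, hz2⟩ := ih a1 (a' :: a1 :: s) rfl (by simpa using hlen')
              exact combine_ii IH' (Or.inl h) (by simp at hlen' ⊢; omega) hz1 hz2

/-- Left cancellation of a single letter. -/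
lemma Rel.cancel_cons {u v : List (Fin (n-1))} {a : Fin (n-1)}
    (h : Rel n (a :: u) (a :: v)) : Rel n u v := by
  obtain ⟨z, h1, h2⟩ := key_all u.length u v a a le_rfl h
  rw [comp_self] at h1 h2
  simp only [List.nil_append] at h1 h2
  exact h1.trans h2.symm

/-- Left cancellation. -/
lemma Rel.cancel_append {w u v : List (Fin (n-1))}
    (h : Rel n (w ++ u) (w ++ v)) : Rel n u v := by
  induction w with
  | nil => simpa using h
  | cons a w ih => exact ih ((by simpa using h : Rel n (a :: (w ++ u)) (a :: (w ++ v))).cancel_cons)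

end KeyMain

section Infra

open Relation List

variable {n : ℕ}

lemma lenHom_ofList (l : List (Fin (n-1))) :
    lenHom n (FreeMonoid.ofList l) = Multiplicative.ofAdd l.length := by
  induction l with
  | nil => exact map_one (lenHom n)
  | cons a l ih =>
      have h : FreeMonoid.ofList (a :: l) = FreeMonoid.of a * FreeMonoid.ofList l := rfl
      rw [h, map_mul, ih, lenHom, FreeMonoid.lift_eval_of, ← ofAdd_add]
      congr 1
      simp [add_comm]

lemma len_pr (g : Word n) : len n (pr n g) = (FreeMonoid.toList g).length := by
  rw [len, pr, Con.lift_mk']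
  have : g = FreeMonoid.ofList (FreeMonoid.toList g) := (FreeMonoid.ofList_toList g).symm
  rw [this, lenHom_ofList]
  simp

lemma len_mul (x y : PB n) : len n (x * y) = len n x + len n y := by
  rw [len, len, len, map_mul, toAdd_mul]

lemma len_eq_zero {x : PB n} (h : len n x = 0) : x = 1 := by
  obtain ⟨g, hg⟩ := Con.mk'_surjective (c := braidCon n) x
  have hg' : pr n g = x := hg
  rw [← hg', len_pr] at h
  have : FreeMonoid.toList g = [] := List.length_eq_zero_iff.mp h
  have hg1 : g = 1 := by
    have h2 := FreeMonoid.ofList_toList g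
    rw [this] at h2
    rw [← h2]
    rfl
  rw [← hg', hg1, map_one]

lemma pr_surjective (x : PB n) : ∃ g : Word n, pr n g = x :=
  Con.mk'_surjective x

lemma ldvd_trans {a b c : PB n} (h1 : ldvd n a b) (h2 : ldvd n b c) : ldvd n a c := by
  obtain ⟨u, hu⟩ := h1; obtain ⟨v, hv⟩ := h2
  exact ⟨u * v, by rw [← mul_assoc, hu, hv]⟩

/-- Lex comparison after a common prefix. -/
lemma lex_append_cons {k i : Fin (n-1)} (h : k < i) :
    ∀ (p X Y : List (Fin (n-1))), List.Lex (· < ·) (p ++ k :: X) (p ++ i :: Y) := by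
  intro p
  induction p with
  | nil => intro X Y; exact List.Lex.rel h
  | cons a p ih => intro X Y; exact List.Lex.cons (ih X Y)

/-- Decomposition of a strict lex comparison between words of equal length. -/
lemma lex_decomp : ∀ {u v : List (Fin (n-1))}, List.Lex (· < ·) u v → u.length = v.length →
    ∃ (p : List (Fin (n-1))) (k : Fin (n-1)) (c : List (Fin (n-1))) (i : Fin (n-1))
      (t : List (Fin (n-1))), u = p ++ k :: c ∧ v = p ++ i :: t ∧ k < i := by
  intro u v h
  induction h with
  | nil => intro hl; simp at hl
  | @rel a l1 b l2 hab => intro _; exact ⟨[], a, l1, b, l2, rfl, rfl, hab⟩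
  | @cons a l1 l2 h ih =>
      intro hl
      obtain ⟨p, k, c, i, t, h1, h2, hki⟩ := ih (by simpa using hl)
      exact ⟨a :: p, k, c, i, t, by rw [h1]; rfl, by rw [h2]; rfl, hki⟩

/-- Splitting an append along a distinguished letter. -/
lemma append_eq_split : ∀ (p w1 : List (Fin (n-1))) (x : Fin (n-1)) (t w2 : List (Fin (n-1))),
    p ++ x :: t = w1 ++ w2 →
    (∃ t1, w1 = p ++ x :: t1 ∧ t = t1 ++ w2) ∨ (∃ q, p = w1 ++ q ∧ w2 = q ++ x :: t) := by
  intro p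
  induction p with
  | nil =>
      intro w1 x t w2 h
      cases w1 with
      | nil => exact Or.inr ⟨[], rfl, by simpa using h.symm⟩
      | cons y w1' =>
          simp only [List.nil_append, List.cons_append, List.cons.injEq] at h
          exact Or.inl ⟨w1', by simp [h.1], h.2⟩
  | cons a p' ih =>
      intro w1 x t w2 h
      cases w1 with
      | nil => exact Or.inr ⟨a :: p', rfl, by simpa using h.symm⟩
      | cons y w1' =>
          simp only [List.cons_append, List.cons.injEq] at h
          rcases ih w1' x t w2 h.2 with ⟨t1, ht1, ht2⟩ | ⟨q, hq1, hq2⟩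
          · exact Or.inl ⟨t1, by rw [h.1, ht1]; rfl, ht2⟩
          · exact Or.inr ⟨q, by rw [h.1, hq1]; rfl, hq2⟩

/-- Every braid has a lex-minimal representative word. -/
lemma exists_rep (β : PB n) : ∃ w : Word n, pr n w = β ∧ w ∈ Ln n := by
  obtain ⟨g, hg⟩ := pr_surjective β
  set S : Set (List (Fin (n-1))) := {l | pr n (FreeMonoid.ofList l) = β} with hS
  have hgS : FreeMonoid.toList g ∈ S := by
    simp only [hS, Set.mem_setOf_eq, FreeMonoid.ofList_toList]; exact hg
  have hfin : S.Finite := by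
    apply Set.Finite.subset (List.finite_length_eq (Fin (n-1)) (FreeMonoid.toList g).length)
    intro l hl
    have h1 : pr n (FreeMonoid.ofList l) = pr n g := by
      rw [hg]; exact hl
    have h2 := (pr_eq_iff.mp h1).length_eq
    simpa [FreeMonoid.toList_ofList] using h2
  obtain ⟨m, hmS, hmin⟩ := Set.exists_min_image S id hfin ⟨_, hgS⟩
  refine ⟨FreeMonoid.ofList m, hmS, ?_⟩
  intro v hv hlex
  have hvS : FreeMonoid.toList v ∈ S := by
    simp only [hS, Set.mem_setOf_eq, FreeMonoid.ofList_toList]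
    rw [hv]; exact hmS
  have hlt : FreeMonoid.toList v < m := by
    have h3 : List.Lex (· < ·) (FreeMonoid.toList v)
        (FreeMonoid.toList (FreeMonoid.ofList m)) := hlex
    rw [FreeMonoid.toList_ofList] at h3
    exact h3
  exact absurd (hmin _ hvS) (not_le.mpr hlt)

lemma omegaRep_spec (β : PB n) : pr n (omegaRep n β) = β ∧ omegaRep n β ∈ Ln n := by
  rw [omegaRep, dif_pos (exists_rep β)]
  exact (exists_rep β).choose_spec

end Infra

/-- `α ∈ F_n(w)` iff `μ ≼ α` for some `μ ∈ F_n^min(w)`;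
equivalently, `F_n(w) = ⋃_{μ ∈ F_n^min(w)} μ·B_n^+`. -/
theorem statement_19 (n : ℕ) (hn : 2 ≤ n) (w : Word n) (hw : w ∈ Ln n) (α : PB n) :
    α ∈ Fset n w ↔ ∃ μ ∈ Fmin n w, ldvd n μ α := by
  constructor
  · intro hα
    set D : Set ℕ := {m | ∃ γ : PB n, ldvd n γ α ∧ γ ∈ Fset n w ∧ len n γ = m} with hD
    have hne : D.Nonempty := ⟨len n α, α, ⟨1, mul_one α⟩, hα, rfl⟩
    obtain ⟨m₀, hm₀, hmin⟩ := wellFounded_lt.has_min D hne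
    obtain ⟨γ, hγd, hγF, hγl⟩ := hm₀
    refine ⟨γ, ⟨hγF, ?_⟩, hγd⟩
    intro b hbF hbd
    obtain ⟨c, hc⟩ := hbd
    have hbα : ldvd n b α := ldvd_trans ⟨c, hc⟩ hγd
    have h1 : ¬ len n b < m₀ := hmin _ ⟨b, hbα, hbF, rfl⟩
    have h2 : len n b + len n c = m₀ := by rw [← hγl, ← hc, len_mul]
    have hc0 : len n c = 0 := by omega
    rw [len_eq_zero hc0, mul_one] at hc
    exact hc
  · rintro ⟨μ, ⟨hμF, _⟩, hμα⟩
    obtain ⟨δ, hδ⟩ := hμα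
    have hforb : w * omegaRep n μ ∉ Ln n := hμF
    rw [Ln, Set.mem_setOf_eq] at hforb
    push_neg at hforb
    obtain ⟨v, hveq, hvlex⟩ := hforb
    have hωμ := omegaRep_spec (n := n) μ
    have hωα := omegaRep_spec (n := n) α
    have hlen : (FreeMonoid.toList v).length
        = (FreeMonoid.toList (w * omegaRep n μ)).length :=
      (pr_eq_iff.mp hveq).length_eq
    obtain ⟨p, k, c, i, t, hu1, hu2, hki⟩ := lex_decomp hvlex hlen
    rw [FreeMonoid.toList_mul] at hu2
    rcases append_eq_split p (FreeMonoid.toList w) i t (FreeMonoid.toList (omegaRep n μ))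
        hu2.symm with ⟨t1, hw1, ht⟩ | ⟨q, hq1, hq2⟩
    · -- the violation happens inside `w`
      obtain ⟨g, hg⟩ := pr_surjective (n := n) δ
      show w * omegaRep n α ∉ Ln n
      intro hLn
      rw [Ln, Set.mem_setOf_eq] at hLn
      have preq : pr n (v * g) = pr n (w * omegaRep n α) := by
        rw [map_mul, map_mul, hg, hveq, map_mul, hωμ.1, hωα.1, mul_assoc, hδ]
      have lexlt : lexLt (v * g) (w * omegaRep n α) := by
        show List.Lex _ (FreeMonoid.toList (v * g)) (FreeMonoid.toList (w * omegaRep n α))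
        rw [FreeMonoid.toList_mul, FreeMonoid.toList_mul, hu1, hw1]
        have := lex_append_cons hki p (c ++ FreeMonoid.toList g)
          (t1 ++ FreeMonoid.toList (omegaRep n α))
        simpa [List.append_assoc] using this
      exact hLn (v * g) preq lexlt
    · -- the violation happens inside `ω(μ)`: contradiction with minimality of `ω(μ)`
      exfalso
      have hrel : Rel n (FreeMonoid.toList v) (FreeMonoid.toList (w * omegaRep n μ)) :=
        pr_eq_iff.mp hveq
      rw [FreeMonoid.toList_mul] at hrel
      have hrel2 : Rel n (FreeMonoid.toList w ++ (q ++ k :: c))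
          (FreeMonoid.toList w ++ FreeMonoid.toList (omegaRep n μ)) := by
        have : FreeMonoid.toList v = FreeMonoid.toList w ++ (q ++ k :: c) := by
          rw [hu1, hq1]; simp [List.append_assoc]
        rwa [this] at hrel
      have hcan := hrel2.cancel_append
      have hpr : pr n (FreeMonoid.ofList (q ++ k :: c)) = pr n (omegaRep n μ) := by
        rw [pr_eq_iff, FreeMonoid.toList_ofList]
        exact hcan
      have hLnμ := hωμ.2
      rw [Ln, Set.mem_setOf_eq] at hLnμ
      refine hLnμ (FreeMonoid.ofList (q ++ k :: c)) hpr ?_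
      show List.Lex _ (FreeMonoid.toList (FreeMonoid.ofList (q ++ k :: c)))
        (FreeMonoid.toList (omegaRep n μ))
      rw [FreeMonoid.toList_ofList, hq2]
      exact lex_append_cons hki q c t

end BraidPaper
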